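/- For every fixed t ≥ 0, the sequence n ↦ K(t,n) + n·(m+1)/(m−μ+1) is monotonically increasing in n for n ≥ m; equivalently, K(t,n+1) − K(t,n) ≥ −(m+1)/(m−μ+1) for all n ≥ m. -/

import Mathlib

open Finset MeasureTheory intervalIntegral Real Filter

noncomputable section

/-- The CDF `F(k) = ∑_{j=1}^k f(j)` of the bundle-size pmf `f`. -/
def cdfF (f : ℕ → ℝ) (k : ℕ) : ℝ := ∑ j ∈ Finset.Icc 1 k, f j

/-- `R(t,n)`: the expected number of remaining packages at time `t` starting from `n`
packages on a line, given via its closed-form solution in terms of the constants `γ`. -/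
def Rfun (f : ℕ → ℝ) (γ : ℕ → ℕ → ℝ) (lam t : ℝ) (n : ℕ) : ℝ :=
  if 0 < cdfF f n then
    ∑ i ∈ Finset.Icc 1 n, γ n i * Real.exp (-(lam * ∑ j ∈ Finset.Icc 1 i, cdfF f j) * t)
  else (n : ℝ)

/-- `K(t,n) = n - R(t,n)`. -/
def Kfun (f : ℕ → ℝ) (γ : ℕ → ℕ → ℝ) (lam t : ℝ) (n : ℕ) : ℝ :=
  (n : ℝ) - Rfun f γ lam t n

/-- The mean `μ = ∑_{k=1}^m k f(k)` of the bundle-size distribution. -/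
def muF (f : ℕ → ℝ) (m : ℕ) : ℝ := ∑ k ∈ Finset.Icc 1 m, (k : ℝ) * f k

/-! ### Auxiliary definitions and lemmas -/

/-- `G(n) = ∑_{j=1}^n F(j)`. -/
def Gfun (f : ℕ → ℝ) (n : ℕ) : ℝ := ∑ j ∈ Finset.Icc 1 n, cdfF f j

section Aux

variable {f : ℕ → ℝ}

lemma cdfF_nonneg (hf : ∀ k, 0 ≤ f k) (k : ℕ) : 0 ≤ cdfF f k :=
  Finset.sum_nonneg fun j _ => hf j

lemma cdfF_mono (hf : ∀ k, 0 ≤ f k) : Monotone (cdfF f) := by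
  intro a b hab
  exact Finset.sum_le_sum_of_subset_of_nonneg
    (Finset.Icc_subset_Icc_right hab) (fun j _ _ => hf j)

lemma cdfF_eq_zero_of_le (hf : ∀ k, 0 ≤ f k) {n j : ℕ} (h : cdfF f n = 0) (hj : j ≤ n) :
    cdfF f j = 0 :=
  le_antisymm (h ▸ cdfF_mono hf hj) (cdfF_nonneg hf j)

lemma Gfun_nonneg (hf : ∀ k, 0 ≤ f k) (n : ℕ) : 0 ≤ Gfun f n :=
  Finset.sum_nonneg fun j _ => cdfF_nonneg hf j

lemma cdfF_succ (k : ℕ) : cdfF f (k + 1) = cdfF f k + f (k + 1) :=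
  Finset.sum_Icc_succ_top (by omega) f

lemma Gfun_succ (k : ℕ) : Gfun f (k + 1) = Gfun f k + cdfF f (k + 1) :=
  Finset.sum_Icc_succ_top (by omega) _

lemma Gfun_sub (i n : ℕ) (hin : i ≤ n) :
    Gfun f n - Gfun f i = ∑ k ∈ Finset.Icc (i + 1) n, cdfF f k := by
  have h1 : Gfun f i + ∑ k ∈ Finset.Icc (i + 1) n, cdfF f k = Gfun f n := by
    unfold Gfun
    rw [show Finset.Icc 1 i = Finset.Ioc 0 i from Finset.Icc_add_one_left_eq_Ioc 0 i,
        show Finset.Icc (i+1) n = Finset.Ioc i n from Finset.Icc_add_one_left_eq_Ioc i n,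
        show Finset.Icc 1 n = Finset.Ioc 0 n from Finset.Icc_add_one_left_eq_Ioc 0 n]
    exact Finset.sum_Ioc_consecutive _ (Nat.zero_le i) hin
  linarith

/-- Derivative of a finite sum of exponentials. -/
lemma hasDerivAt_expsum (c a : ℕ → ℝ) (s : Finset ℕ) (t : ℝ) :
    HasDerivAt (fun x => ∑ i ∈ s, c i * Real.exp (a i * x))
      (∑ i ∈ s, c i * a i * Real.exp (a i * t)) t := by
  apply HasDerivAt.fun_sum
  intro i _
  have h1 : HasDerivAt (fun x : ℝ => a i * x) (a i) t := by
    simpa using (hasDerivAt_id t).const_mul (a i)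
  have h2 := h1.exp.const_mul (c i)
  convert h2 using 1
  case e'_4 => rfl
  case e'_9 => ring

/-- Double sum swap with triangular condition. -/
lemma sum_swap_aux (F : ℕ → ℝ) (g : ℕ → ℕ → ℝ) (w : ℕ → ℝ) (n : ℕ) :
    ∑ j ∈ Finset.Icc 1 n, F j * ∑ i ∈ Finset.Icc 1 (n - j), g (n - j) i * w i
      = ∑ i ∈ Finset.Icc 1 n, (∑ j ∈ Finset.Icc 1 (n - i), F j * g (n - j) i) * w i := by
  have key : ∀ x ∈ Finset.Icc 1 n,
      Finset.Icc 1 (n - x) = (Finset.Icc 1 n).filter (fun y => y + x ≤ n) := by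
    intro x hx
    simp only [Finset.mem_Icc] at hx
    ext y
    simp only [Finset.mem_Icc, Finset.mem_filter]
    omega
  calc ∑ j ∈ Finset.Icc 1 n, F j * ∑ i ∈ Finset.Icc 1 (n - j), g (n - j) i * w i
      = ∑ j ∈ Finset.Icc 1 n, ∑ i ∈ Finset.Icc 1 n,
          (if i + j ≤ n then F j * (g (n - j) i * w i) else 0) := by
        refine Finset.sum_congr rfl fun j hj => ?_
        rw [Finset.mul_sum, key j hj, Finset.sum_filter]
    _ = ∑ i ∈ Finset.Icc 1 n, ∑ j ∈ Finset.Icc 1 n,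
          (if i + j ≤ n then F j * (g (n - j) i * w i) else 0) := Finset.sum_comm
    _ = ∑ i ∈ Finset.Icc 1 n, (∑ j ∈ Finset.Icc 1 (n - i), F j * g (n - j) i) * w i := by
        refine Finset.sum_congr rfl fun i hi => ?_
        have key2 : Finset.Icc 1 (n - i) = (Finset.Icc 1 n).filter (fun j => i + j ≤ n) := by
          simp only [Finset.mem_Icc] at hi
          ext y
          simp only [Finset.mem_Icc, Finset.mem_filter]
          omega
        rw [Finset.sum_mul, key2, Finset.sum_filter]
        refine Finset.sum_congr rfl fun j _ => ?_
        split_ifs with h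
        · ring
        · ring

end Aux

section Main

variable {m : ℕ} {f : ℕ → ℝ} {lam : ℝ} {γ : ℕ → ℕ → ℝ}

/-- Uniform representation of `Rfun` as an exponential sum. -/
lemma Srep (hf : ∀ k, 0 ≤ f k)
    (hγ_zero : ∀ n j : ℕ, cdfF f n = 0 → 1 ≤ j → j ≤ n → γ n j = 1)
    (s : ℝ) (k : ℕ) :
    Rfun f γ lam s k = ∑ i ∈ Finset.Icc 1 k, γ k i * Real.exp (-(lam * Gfun f i) * s) := by
  unfold Rfun
  split_ifs with h
  · rfl
  · have h0 : cdfF f k = 0 := le_antisymm (not_lt.mp h) (cdfF_nonneg hf k)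
    have : ∀ i ∈ Finset.Icc 1 k, γ k i * Real.exp (-(lam * Gfun f i) * s) = 1 := by
      intro i hi
      simp only [Finset.mem_Icc] at hi
      have hG : Gfun f i = 0 := by
        apply Finset.sum_eq_zero
        intro j hj
        simp only [Finset.mem_Icc] at hj
        exact cdfF_eq_zero_of_le hf h0 (le_trans hj.2 hi.2)
      rw [hγ_zero k i h0 hi.1 hi.2, hG]
      simp
    rw [Finset.sum_congr rfl this]
    simp [Nat.card_Icc]

/-- Initial value: `R(0,n) = n`. -/
lemma Sinit (hf : ∀ k, 0 ≤ f k)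
    (hγ_diag : ∀ n : ℕ, 0 < cdfF f n →
      γ n n = (n : ℝ) - ∑ i ∈ Finset.Icc 1 (n - 1), γ n i)
    (n : ℕ) : Rfun f γ lam 0 n = n := by
  unfold Rfun
  split_ifs with h
  · have hn : 1 ≤ n := by
      by_contra hc
      have : n = 0 := by omega
      subst this
      simp [cdfF] at h
    have hsplit : Finset.Icc 1 n = insert n (Finset.Icc 1 (n - 1)) := by
      ext x
      simp only [Finset.mem_Icc, Finset.mem_insert]
      omega
    have hni : n ∉ Finset.Icc 1 (n - 1) := by
      simp only [Finset.mem_Icc]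
      omega
    have : ∀ i ∈ Finset.Icc 1 n,
        γ n i * Real.exp (-(lam * ∑ j ∈ Finset.Icc 1 i, cdfF f j) * 0) = γ n i := by
      intro i _
      simp
    rw [Finset.sum_congr rfl this, hsplit, Finset.sum_insert hni, hγ_diag n h]
    ring
  · rfl

/-- `R(t,0) = 0`. -/
lemma Szero (t : ℝ) : Rfun f γ lam t 0 = 0 := by
  unfold Rfun
  have : cdfF f 0 = 0 := by simp [cdfF]
  rw [this]
  simp

/-- Coefficient identity from the `γ` recursion. -/
lemma coeff_id (hf : ∀ k, 0 ≤ f k)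
    (hγ_rec : ∀ n i : ℕ, 0 < cdfF f n → 1 ≤ i → i < n →
      γ n i = 2 * (∑ j ∈ Finset.Icc 1 (n - i), cdfF f j * γ (n - j) i) /
        (∑ k ∈ Finset.Icc (i + 1) n, cdfF f k))
    (n i : ℕ) (hi1 : 1 ≤ i) (hin : i ≤ n) :
    (Gfun f n - Gfun f i) * γ n i = 2 * ∑ j ∈ Finset.Icc 1 (n - i), cdfF f j * γ (n - j) i := by
  rcases eq_or_lt_of_le hin with rfl | hlt
  · simp [Gfun_sub i i le_rfl]
  · rw [Gfun_sub i n hin]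
    by_cases hF : 0 < cdfF f n
    · have hd : 0 < ∑ k ∈ Finset.Icc (i + 1) n, cdfF f k := by
        refine lt_of_lt_of_le hF ?_
        exact Finset.single_le_sum (fun k _ => cdfF_nonneg hf k)
          (Finset.mem_Icc.mpr ⟨hlt, le_rfl⟩)
      rw [hγ_rec n i hF hi1 hlt]
      field_simp
    · have h0 : cdfF f n = 0 := le_antisymm (not_lt.mp hF) (cdfF_nonneg hf n)
      have hL : ∑ k ∈ Finset.Icc (i + 1) n, cdfF f k = 0 := by
        apply Finset.sum_eq_zero
        intro k hk
        simp only [Finset.mem_Icc] at hk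
        exact cdfF_eq_zero_of_le hf h0 hk.2
      have hR : ∑ j ∈ Finset.Icc 1 (n - i), cdfF f j * γ (n - j) i = 0 := by
        apply Finset.sum_eq_zero
        intro j hj
        simp only [Finset.mem_Icc] at hj
        rw [cdfF_eq_zero_of_le hf h0 (by omega), zero_mul]
      rw [hL, hR]
      ring

/-- The ODE satisfied by `R(·,n)`. -/
lemma hasDerivAt_R (hf : ∀ k, 0 ≤ f k)
    (hγ_zero : ∀ n j : ℕ, cdfF f n = 0 → 1 ≤ j → j ≤ n → γ n j = 1)
    (hγ_rec : ∀ n i : ℕ, 0 < cdfF f n → 1 ≤ i → i < n →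
      γ n i = 2 * (∑ j ∈ Finset.Icc 1 (n - i), cdfF f j * γ (n - j) i) /
        (∑ k ∈ Finset.Icc (i + 1) n, cdfF f k))
    (n : ℕ) (t : ℝ) :
    HasDerivAt (fun s => Rfun f γ lam s n)
      (-(lam * Gfun f n) * Rfun f γ lam t n
        + 2 * lam * ∑ j ∈ Finset.Icc 1 n, cdfF f j * Rfun f γ lam t (n - j)) t := by
  have hfun : (fun s => Rfun f γ lam s n)
      = (fun s => ∑ i ∈ Finset.Icc 1 n, γ n i * Real.exp (-(lam * Gfun f i) * s)) :=
    funext fun s => Srep hf hγ_zero s n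
  rw [hfun]
  have h := hasDerivAt_expsum (fun i => γ n i) (fun i => -(lam * Gfun f i)) (Finset.Icc 1 n) t
  have hval : ∑ i ∈ Finset.Icc 1 n, γ n i * -(lam * Gfun f i) * Real.exp (-(lam * Gfun f i) * t)
      = -(lam * Gfun f n) * Rfun f γ lam t n
        + 2 * lam * ∑ j ∈ Finset.Icc 1 n, cdfF f j * Rfun f γ lam t (n - j) := by
    simp only [Srep hf hγ_zero t]
    rw [show (∑ j ∈ Finset.Icc 1 n, cdfF f j *
          ∑ i ∈ Finset.Icc 1 (n - j), γ (n - j) i * Real.exp (-(lam * Gfun f i) * t))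
        = ∑ i ∈ Finset.Icc 1 n, (∑ j ∈ Finset.Icc 1 (n - i), cdfF f j * γ (n - j) i) *
            Real.exp (-(lam * Gfun f i) * t) from
      sum_swap_aux (cdfF f) γ (fun i => Real.exp (-(lam * Gfun f i) * t)) n]
    rw [Finset.mul_sum, Finset.mul_sum, ← Finset.sum_add_distrib]
    refine Finset.sum_congr rfl fun i hi => ?_
    simp only [Finset.mem_Icc] at hi
    have key := coeff_id hf hγ_rec n i hi.1 hi.2
    linear_combination (lam * Real.exp (-(lam * Gfun f i) * t)) * key
  rw [hval] at h
  exact h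

end Main

section Comparison

/-- If `φ` has nonpositive derivative on `(0,∞)`, then `φ t ≤ φ 0` for `t ≥ 0`. -/
lemma le_init_of_deriv_nonpos {φ φ' : ℝ → ℝ}
    (hd : ∀ s, HasDerivAt φ (φ' s) s) (h' : ∀ s, 0 < s → φ' s ≤ 0)
    {t : ℝ} (ht : 0 ≤ t) : φ t ≤ φ 0 := by
  have hc : ContinuousOn φ (Set.Ici 0) := fun x _ => (hd x).continuousAt.continuousWithinAt
  have hdiff : DifferentiableOn ℝ φ (interior (Set.Ici (0:ℝ))) :=
    fun x _ => (hd x).differentiableAt.differentiableWithinAt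
  have hmono := antitoneOn_of_deriv_nonpos (convex_Ici 0) hc hdiff (fun x hx => by
    rw [(hd x).deriv]
    exact h' x (by simpa [interior_Ici] using hx))
  exact hmono Set.self_mem_Ici ht ht

/-- If `φ` has nonnegative derivative on `(0,∞)`, then `φ 0 ≤ φ t` for `t ≥ 0`. -/
lemma init_le_of_deriv_nonneg {φ φ' : ℝ → ℝ}
    (hd : ∀ s, HasDerivAt φ (φ' s) s) (h' : ∀ s, 0 < s → 0 ≤ φ' s)
    {t : ℝ} (ht : 0 ≤ t) : φ 0 ≤ φ t := by
  have hc : ContinuousOn φ (Set.Ici 0) := fun x _ => (hd x).continuousAt.continuousWithinAt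
  have hdiff : DifferentiableOn ℝ φ (interior (Set.Ici (0:ℝ))) :=
    fun x _ => (hd x).differentiableAt.differentiableWithinAt
  have hmono := monotoneOn_of_deriv_nonneg (convex_Ici 0) hc hdiff (fun x hx => by
    rw [(hd x).deriv]
    exact h' x (by simpa [interior_Ici] using hx))
  exact hmono Set.self_mem_Ici ht ht

end Comparison

section Cheb

variable {f : ℕ → ℝ}

/-- Chebyshev-type inequality: `∑_{j=1}^n F(j) (2j - n) ≥ 0` for nondecreasing nonneg `F`. -/
lemma cheb (hf : ∀ k, 0 ≤ f k) (n : ℕ) :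
    0 ≤ ∑ j ∈ Finset.Icc 1 n, cdfF f j * (2 * (j : ℝ) - n) := by
  have hrefl : ∑ j ∈ Finset.Icc 1 n, cdfF f j * (2 * (j : ℝ) - n)
      = ∑ j ∈ Finset.Icc 1 n, cdfF f (n + 1 - j) * (2 * ((n + 1 - j : ℕ) : ℝ) - n) := by
    apply Finset.sum_nbij' (fun j => n + 1 - j) (fun j => n + 1 - j)
    · intro a ha; simp only [Finset.mem_Icc] at ha ⊢; omega
    · intro a ha; simp only [Finset.mem_Icc] at ha ⊢; omega
    · intro a ha; simp only [Finset.mem_Icc] at ha; omega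
    · intro a ha; simp only [Finset.mem_Icc] at ha; omega
    · intro a ha
      simp only [Finset.mem_Icc] at ha
      have h1 : n + 1 - (n + 1 - a) = a := by omega
      rw [h1]
  have key : ∀ j ∈ Finset.Icc 1 n,
      0 ≤ cdfF f j * (2 * (j : ℝ) - n) + cdfF f (n + 1 - j) * (2 * ((n + 1 - j : ℕ) : ℝ) - n) := by
    intro j hj
    simp only [Finset.mem_Icc] at hj
    have hc : ((n + 1 - j : ℕ) : ℝ) = (n : ℝ) + 1 - (j : ℝ) := by
      rw [Nat.cast_sub (by omega)]; push_cast; ring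
    rw [hc]
    rcases le_or_gt (n + 1) (2 * j) with h | h
    · have hmon : cdfF f (n + 1 - j) ≤ cdfF f j := cdfF_mono hf (by omega)
      have hcj : (n : ℝ) + 1 ≤ 2 * (j : ℝ) := by exact_mod_cast h
      nlinarith [cdfF_nonneg hf (n + 1 - j)]
    · have hmon : cdfF f j ≤ cdfF f (n + 1 - j) := cdfF_mono hf (by omega)
      have hcj : 2 * (j : ℝ) ≤ (n : ℝ) := by exact_mod_cast (show 2 * j ≤ n by omega)
      nlinarith [cdfF_nonneg hf (n + 1 - j), cdfF_nonneg hf j]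
  have hsum := Finset.sum_nonneg key
  rw [Finset.sum_add_distrib] at hsum
  linarith [hrefl]

end Cheb

section Bounds

variable {f : ℕ → ℝ} {lam : ℝ} {γ : ℕ → ℕ → ℝ}

/-- `0 ≤ R(t,n) ≤ n` for all `t ≥ 0`. -/
lemma S_bounds (hf : ∀ k, 0 ≤ f k) (hlam : 0 < lam)
    (hγ_zero : ∀ n j : ℕ, cdfF f n = 0 → 1 ≤ j → j ≤ n → γ n j = 1)
    (hγ_rec : ∀ n i : ℕ, 0 < cdfF f n → 1 ≤ i → i < n →
      γ n i = 2 * (∑ j ∈ Finset.Icc 1 (n - i), cdfF f j * γ (n - j) i) /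
        (∑ k ∈ Finset.Icc (i + 1) n, cdfF f k))
    (hγ_diag : ∀ n : ℕ, 0 < cdfF f n →
      γ n n = (n : ℝ) - ∑ i ∈ Finset.Icc 1 (n - 1), γ n i) :
    ∀ n : ℕ, ∀ t : ℝ, 0 ≤ t → 0 ≤ Rfun f γ lam t n ∧ Rfun f γ lam t n ≤ n := by
  intro n
  induction n using Nat.strong_induction_on with
  | _ n IH =>
  intro t ht
  set Λ := lam * Gfun f n with hΛdef
  have hexp : ∀ s : ℝ, HasDerivAt (fun x => Real.exp (Λ * x)) (Real.exp (Λ * s) * Λ) s :=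
    fun s => by simpa using ((hasDerivAt_id s).const_mul Λ).exp
  have ode := fun s => hasDerivAt_R (γ := γ) (lam := lam) hf hγ_zero hγ_rec n s
  have hinit := Sinit (γ := γ) (lam := lam) hf hγ_diag n
  have hIHterm : ∀ s : ℝ, 0 ≤ s → ∀ j ∈ Finset.Icc 1 n,
      0 ≤ Rfun f γ lam s (n - j) ∧ Rfun f γ lam s (n - j) ≤ ((n - j : ℕ) : ℝ) := by
    intro s hs j hj
    simp only [Finset.mem_Icc] at hj
    exact IH (n - j) (by omega) s hs
  constructor
  · -- lower bound via ψ = exp(Λ x) * R x n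
    have hψ : ∀ s, HasDerivAt (fun x => Real.exp (Λ * x) * Rfun f γ lam x n)
        (Real.exp (Λ * s) * Λ * Rfun f γ lam s n
          + Real.exp (Λ * s) * (-(lam * Gfun f n) * Rfun f γ lam s n
            + 2 * lam * ∑ j ∈ Finset.Icc 1 n, cdfF f j * Rfun f γ lam s (n - j))) s :=
      fun s => (hexp s).mul (ode s)
    have hge := init_le_of_deriv_nonneg hψ (fun s hs => by
      have hSig : 0 ≤ ∑ j ∈ Finset.Icc 1 n, cdfF f j * Rfun f γ lam s (n - j) :=
        Finset.sum_nonneg fun j hj =>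
          mul_nonneg (cdfF_nonneg hf j) (hIHterm s hs.le j hj).1
      have hrw : Real.exp (Λ * s) * Λ * Rfun f γ lam s n
          + Real.exp (Λ * s) * (-(lam * Gfun f n) * Rfun f γ lam s n
            + 2 * lam * ∑ j ∈ Finset.Icc 1 n, cdfF f j * Rfun f γ lam s (n - j))
          = Real.exp (Λ * s) * (2 * lam)
            * ∑ j ∈ Finset.Icc 1 n, cdfF f j * Rfun f γ lam s (n - j) := by
        rw [hΛdef]; ring
      rw [hrw]
      positivity) ht
    simp only [mul_zero, Real.exp_zero, one_mul, hinit] at hge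
    nlinarith [Real.exp_pos (Λ * t), Nat.cast_nonneg (α := ℝ) n]
  · -- upper bound via φ = exp(Λ x) * (R x n - n)
    have hφ : ∀ s, HasDerivAt (fun x => Real.exp (Λ * x) * (Rfun f γ lam x n - n))
        (Real.exp (Λ * s) * Λ * (Rfun f γ lam s n - n)
          + Real.exp (Λ * s) * (-(lam * Gfun f n) * Rfun f γ lam s n
            + 2 * lam * ∑ j ∈ Finset.Icc 1 n, cdfF f j * Rfun f γ lam s (n - j))) s :=
      fun s => (hexp s).mul ((ode s).sub_const (n : ℝ))
    have hle := le_init_of_deriv_nonpos hφ (fun s hs => by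
      have hSig : ∑ j ∈ Finset.Icc 1 n, cdfF f j * Rfun f γ lam s (n - j)
          ≤ ∑ j ∈ Finset.Icc 1 n, cdfF f j * ((n : ℝ) - (j : ℝ)) := by
        refine Finset.sum_le_sum fun j hj => ?_
        have h2 := (hIHterm s hs.le j hj).2
        simp only [Finset.mem_Icc] at hj
        have hc : ((n - j : ℕ) : ℝ) = (n : ℝ) - (j : ℝ) := by
          rw [Nat.cast_sub hj.2]
        exact mul_le_mul_of_nonneg_left (by rw [← hc]; exact h2) (cdfF_nonneg hf j)
      have hch := cheb hf n
      have hkey : 2 * ∑ j ∈ Finset.Icc 1 n, cdfF f j * ((n : ℝ) - (j : ℝ))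
          ≤ Gfun f n * n := by
        have hexpand : Gfun f n * (n : ℝ)
            - 2 * ∑ j ∈ Finset.Icc 1 n, cdfF f j * ((n : ℝ) - (j : ℝ))
            = ∑ j ∈ Finset.Icc 1 n, cdfF f j * (2 * (j : ℝ) - n) := by
          rw [Gfun, Finset.sum_mul, Finset.mul_sum, ← Finset.sum_sub_distrib]
          exact Finset.sum_congr rfl fun j _ => by ring
        linarith
      have hrw : Real.exp (Λ * s) * Λ * (Rfun f γ lam s n - n)
          + Real.exp (Λ * s) * (-(lam * Gfun f n) * Rfun f γ lam s n
            + 2 * lam * ∑ j ∈ Finset.Icc 1 n, cdfF f j * Rfun f γ lam s (n - j))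
          = Real.exp (Λ * s) * lam
            * (2 * (∑ j ∈ Finset.Icc 1 n, cdfF f j * Rfun f γ lam s (n - j))
              - Gfun f n * n) := by
        rw [hΛdef]; ring
      rw [hrw]
      apply mul_nonpos_of_nonneg_of_nonpos
      · positivity
      · linarith) ht
    simp only [mul_zero, Real.exp_zero, one_mul, hinit, sub_self] at hle
    nlinarith [Real.exp_pos (Λ * t)]

end Bounds

section MuG

variable {m : ℕ} {f : ℕ → ℝ}

lemma cdfF_eq_one (hf_sum : ∑ k ∈ Finset.Icc 1 m, f k = 1)
    (hf_supp : ∀ k : ℕ, k = 0 ∨ m < k → f k = 0) {k : ℕ} (hk : m ≤ k) :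
    cdfF f k = 1 := by
  rw [cdfF, ← Finset.sum_subset (Finset.Icc_subset_Icc_right hk)
    (fun x hx hnx => hf_supp x (by
      simp only [Finset.mem_Icc] at hx hnx
      omega))]
  exact hf_sum

lemma mu_ge_one (hf : ∀ k, 0 ≤ f k) (hf_sum : ∑ k ∈ Finset.Icc 1 m, f k = 1) :
    1 ≤ muF f m := by
  rw [muF, ← hf_sum]
  refine Finset.sum_le_sum fun k hk => ?_
  simp only [Finset.mem_Icc] at hk
  have h1 : (1 : ℝ) ≤ (k : ℝ) := by exact_mod_cast hk.1
  nlinarith [hf k]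

lemma mu_le_m (hf : ∀ k, 0 ≤ f k) (hf_sum : ∑ k ∈ Finset.Icc 1 m, f k = 1) :
    muF f m ≤ (m : ℝ) := by
  have : muF f m ≤ ∑ k ∈ Finset.Icc 1 m, (m : ℝ) * f k := by
    refine Finset.sum_le_sum fun k hk => ?_
    simp only [Finset.mem_Icc] at hk
    have h1 : (k : ℝ) ≤ (m : ℝ) := by exact_mod_cast hk.2
    nlinarith [hf k]
  rw [← Finset.mul_sum, hf_sum] at this
  linarith

lemma Gfun_at_m (hf_sum : ∑ k ∈ Finset.Icc 1 m, f k = 1) :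
    Gfun f m = (m : ℝ) + 1 - muF f m := by
  have h1 : ∀ i ∈ Finset.Icc 1 m, cdfF f i
      = ∑ j ∈ Finset.Icc 1 m, (if j ≤ i then f j else 0) := by
    intro i hi
    simp only [Finset.mem_Icc] at hi
    rw [cdfF, show Finset.Icc 1 i = (Finset.Icc 1 m).filter (fun j => j ≤ i) from by
      ext x; simp only [Finset.mem_Icc, Finset.mem_filter]; omega, Finset.sum_filter]
  rw [Gfun, Finset.sum_congr rfl h1, Finset.sum_comm]
  have h2 : ∀ j ∈ Finset.Icc 1 m, ∑ i ∈ Finset.Icc 1 m, (if j ≤ i then f j else 0)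
      = f j * ((m : ℝ) + 1 - (j : ℝ)) := by
    intro j hj
    simp only [Finset.mem_Icc] at hj
    rw [← Finset.sum_filter, show (Finset.Icc 1 m).filter (fun i => j ≤ i) = Finset.Icc j m from by
      ext x; simp only [Finset.mem_Icc, Finset.mem_filter]; omega,
      Finset.sum_const, Nat.card_Icc, nsmul_eq_mul, Nat.cast_sub (by omega)]
    push_cast
    ring
  rw [Finset.sum_congr rfl h2]
  have h3 : ∑ j ∈ Finset.Icc 1 m, f j * ((m : ℝ) + 1 - (j : ℝ))
      = ((m : ℝ) + 1) * (∑ j ∈ Finset.Icc 1 m, f j) - ∑ j ∈ Finset.Icc 1 m, (j : ℝ) * f j := by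
    rw [Finset.mul_sum, ← Finset.sum_sub_distrib]
    exact Finset.sum_congr rfl fun j _ => by ring
  rw [h3, hf_sum, muF]
  ring

lemma Gfun_ge_m (hf_sum : ∑ k ∈ Finset.Icc 1 m, f k = 1)
    (hf_supp : ∀ k : ℕ, k = 0 ∨ m < k → f k = 0) :
    ∀ k : ℕ, m ≤ k → Gfun f k = (k : ℝ) + 1 - muF f m := by
  intro k hk
  induction k, hk using Nat.le_induction with
  | base => exact Gfun_at_m hf_sum
  | succ k hk IH =>
    rw [Gfun_succ, IH, cdfF_eq_one hf_sum hf_supp (by omega)]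
    push_cast
    ring

end MuG

section DLe

variable {m : ℕ} {f : ℕ → ℝ} {lam : ℝ} {γ : ℕ → ℕ → ℝ}

/-- Key step: `R(t,n+1) - R(t,n) ≤ 1 + (m+1)/(m+1-μ)` for `n ≥ m`. -/
lemma D_le (hm : 1 ≤ m) (hf : ∀ k, 0 ≤ f k)
    (hf_sum : ∑ k ∈ Finset.Icc 1 m, f k = 1)
    (hf_supp : ∀ k : ℕ, k = 0 ∨ m < k → f k = 0)
    (hlam : 0 < lam)
    (hγ_zero : ∀ n j : ℕ, cdfF f n = 0 → 1 ≤ j → j ≤ n → γ n j = 1)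
    (hγ_rec : ∀ n i : ℕ, 0 < cdfF f n → 1 ≤ i → i < n →
      γ n i = 2 * (∑ j ∈ Finset.Icc 1 (n - i), cdfF f j * γ (n - j) i) /
        (∑ k ∈ Finset.Icc (i + 1) n, cdfF f k))
    (hγ_diag : ∀ n : ℕ, 0 < cdfF f n →
      γ n n = (n : ℝ) - ∑ i ∈ Finset.Icc 1 (n - 1), γ n i)
    {n : ℕ} (hn : m ≤ n) {t : ℝ} (ht : 0 ≤ t) :
    Rfun f γ lam t (n + 1) - Rfun f γ lam t n
      ≤ 1 + ((m : ℝ) + 1) / ((m : ℝ) + 1 - muF f m) := by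
  have hμ1 := mu_ge_one hf hf_sum
  have hμm := mu_le_m hf hf_sum
  set μ := muF f m with hμdef
  have hdpos : 0 < (m : ℝ) + 1 - μ := by linarith
  set B := 1 + ((m : ℝ) + 1) / ((m : ℝ) + 1 - μ) with hBdef
  have hB2 : 2 ≤ B := by
    have : 1 ≤ ((m : ℝ) + 1) / ((m : ℝ) + 1 - μ) := by
      rw [le_div_iff₀ hdpos]
      linarith
    rw [hBdef]
    linarith
  set Λ := lam * Gfun f (n + 1) with hΛdef
  have hexp : ∀ s : ℝ, HasDerivAt (fun x => Real.exp (Λ * x)) (Real.exp (Λ * s) * Λ) s :=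
    fun s => by simpa using ((hasDerivAt_id s).const_mul Λ).exp
  have ode := fun k s => hasDerivAt_R (γ := γ) (lam := lam) hf hγ_zero hγ_rec k s
  have hSb := S_bounds (γ := γ) (lam := lam) hf hlam hγ_zero hγ_rec hγ_diag
  have hGn1 : Gfun f (n + 1) = (n : ℝ) + 2 - μ := by
    rw [Gfun_ge_m hf_sum hf_supp (n + 1) (by omega)]
    push_cast
    ring
  have hφ : ∀ s, HasDerivAt
      (fun x => Real.exp (Λ * x) * (Rfun f γ lam x (n + 1) - Rfun f γ lam x n - B))
      (Real.exp (Λ * s) * Λ * (Rfun f γ lam s (n + 1) - Rfun f γ lam s n - B)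
        + Real.exp (Λ * s) * ((-(lam * Gfun f (n + 1)) * Rfun f γ lam s (n + 1)
            + 2 * lam * ∑ j ∈ Finset.Icc 1 (n + 1), cdfF f j * Rfun f γ lam s (n + 1 - j))
          - (-(lam * Gfun f n) * Rfun f γ lam s n
            + 2 * lam * ∑ j ∈ Finset.Icc 1 n, cdfF f j * Rfun f γ lam s (n - j)))) s :=
    fun s => (hexp s).mul (((ode (n + 1) s).sub (ode n s)).sub_const B)
  have hle := le_init_of_deriv_nonpos hφ (fun s hs => by
    -- rearrangement of the sums
    have hmap : ∑ j ∈ Finset.Icc 1 n, cdfF f j * Rfun f γ lam s (n - j)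
        = ∑ j ∈ Finset.Icc 2 (n + 1), cdfF f (j - 1) * Rfun f γ lam s (n + 1 - j) := by
      apply Finset.sum_nbij' (fun j => j + 1) (fun j => j - 1)
      · intro a ha; simp only [Finset.mem_Icc] at ha ⊢; omega
      · intro a ha; simp only [Finset.mem_Icc] at ha ⊢; omega
      · intro a ha; simp only [Finset.mem_Icc] at ha; omega
      · intro a ha; simp only [Finset.mem_Icc] at ha; omega
      · intro a ha
        simp only [Finset.mem_Icc] at ha
        have h1 : a + 1 - 1 = a := by omega
        have h2 : n + 1 - (a + 1) = n - a := by omega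
        rw [h1, h2]
    have hins : Finset.Icc 1 (n + 1) = insert 1 (Finset.Icc 2 (n + 1)) := by
      ext x
      simp only [Finset.mem_Icc, Finset.mem_insert]
      omega
    have hnotmem : (1 : ℕ) ∉ Finset.Icc 2 (n + 1) := by
      simp only [Finset.mem_Icc]
      omega
    have hF1 : cdfF f 1 = f 1 := by simp [cdfF]
    have claim1 : ∑ j ∈ Finset.Icc 1 (n + 1), cdfF f j * Rfun f γ lam s (n + 1 - j)
        - ∑ j ∈ Finset.Icc 1 n, cdfF f j * Rfun f γ lam s (n - j)
        = ∑ j ∈ Finset.Icc 1 (n + 1), f j * Rfun f γ lam s (n + 1 - j) := by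
      rw [hmap, hins, Finset.sum_insert hnotmem, Finset.sum_insert hnotmem]
      have h3 : ∑ j ∈ Finset.Icc 2 (n + 1), cdfF f j * Rfun f γ lam s (n + 1 - j)
          - ∑ j ∈ Finset.Icc 2 (n + 1), cdfF f (j - 1) * Rfun f γ lam s (n + 1 - j)
          = ∑ j ∈ Finset.Icc 2 (n + 1), f j * Rfun f γ lam s (n + 1 - j) := by
        rw [← Finset.sum_sub_distrib]
        refine Finset.sum_congr rfl fun j hj => ?_
        simp only [Finset.mem_Icc] at hj
        obtain ⟨k, rfl⟩ : ∃ k, j = k + 1 := ⟨j - 1, by omega⟩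
        have hFf : cdfF f (k + 1) - cdfF f (k + 1 - 1) = f (k + 1) := by
          have h4 : k + 1 - 1 = k := by omega
          rw [h4, cdfF_succ]
          ring
        rw [← sub_mul, hFf]
      rw [hF1] at *
      linarith [h3]
    -- bound on the f-weighted sum
    have step2 : ∑ j ∈ Finset.Icc 1 (n + 1), f j * Rfun f γ lam s (n + 1 - j)
        ≤ (n : ℝ) + 1 - μ := by
      have hb1 : ∑ j ∈ Finset.Icc 1 (n + 1), f j * Rfun f γ lam s (n + 1 - j)
          ≤ ∑ j ∈ Finset.Icc 1 (n + 1), f j * ((n : ℝ) + 1 - (j : ℝ)) := by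
        refine Finset.sum_le_sum fun j hj => ?_
        simp only [Finset.mem_Icc] at hj
        have h5 := (hSb (n + 1 - j) s hs.le).2
        have hc : ((n + 1 - j : ℕ) : ℝ) = (n : ℝ) + 1 - (j : ℝ) := by
          rw [Nat.cast_sub hj.2]
          push_cast
          ring
        rw [hc] at h5
        exact mul_le_mul_of_nonneg_left h5 (hf j)
      have hb2 : ∑ j ∈ Finset.Icc 1 (n + 1), f j * ((n : ℝ) + 1 - (j : ℝ))
          = ∑ j ∈ Finset.Icc 1 m, f j * ((n : ℝ) + 1 - (j : ℝ)) := by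
        rw [← Finset.sum_subset (Finset.Icc_subset_Icc_right (by omega : m ≤ n + 1))
          (fun x hx hnx => by
            have : f x = 0 := hf_supp x (by
              simp only [Finset.mem_Icc] at hx hnx
              omega)
            rw [this, zero_mul])]
      have hb3 : ∑ j ∈ Finset.Icc 1 m, f j * ((n : ℝ) + 1 - (j : ℝ))
          = ((n : ℝ) + 1) * (∑ j ∈ Finset.Icc 1 m, f j)
            - ∑ j ∈ Finset.Icc 1 m, (j : ℝ) * f j := by
        rw [Finset.mul_sum, ← Finset.sum_sub_distrib]
        exact Finset.sum_congr rfl fun j _ => by ring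
      rw [hb2, hb3, hf_sum] at hb1
      rw [hμdef, muF]
      linarith
    have hRn := hSb n s hs.le
    have hFn1 : 0 ≤ cdfF f (n + 1) := cdfF_nonneg hf (n + 1)
    have hGsucc : Gfun f (n + 1) = Gfun f n + cdfF f (n + 1) := Gfun_succ n
    -- the derivative value equals exp * lam * bracket
    have hrw : Real.exp (Λ * s) * Λ * (Rfun f γ lam s (n + 1) - Rfun f γ lam s n - B)
        + Real.exp (Λ * s) * ((-(lam * Gfun f (n + 1)) * Rfun f γ lam s (n + 1)
            + 2 * lam * ∑ j ∈ Finset.Icc 1 (n + 1), cdfF f j * Rfun f γ lam s (n + 1 - j))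
          - (-(lam * Gfun f n) * Rfun f γ lam s n
            + 2 * lam * ∑ j ∈ Finset.Icc 1 n, cdfF f j * Rfun f γ lam s (n - j)))
        = Real.exp (Λ * s) * lam * (-(Gfun f (n + 1)) * B
            - cdfF f (n + 1) * Rfun f γ lam s n
            + 2 * (∑ j ∈ Finset.Icc 1 (n + 1), cdfF f j * Rfun f γ lam s (n + 1 - j)
              - ∑ j ∈ Finset.Icc 1 n, cdfF f j * Rfun f γ lam s (n - j))) := by
      rw [hΛdef]
      linear_combination (-(Real.exp (lam * Gfun f (n + 1) * s) * lam
        * Rfun f γ lam s n)) * hGsucc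
    rw [hrw]
    apply mul_nonpos_of_nonneg_of_nonpos
    · positivity
    · rw [claim1, hGn1]
      have hbr : 2 * ((n : ℝ) + 1 - μ) ≤ ((n : ℝ) + 2 - μ) * B := by
        have hnm : (m : ℝ) ≤ (n : ℝ) := by exact_mod_cast hn
        nlinarith
      nlinarith [mul_nonneg hFn1 hRn.1, step2]) ht
  have hinit1 := Sinit (γ := γ) (lam := lam) hf hγ_diag (n + 1)
  have hinit2 := Sinit (γ := γ) (lam := lam) hf hγ_diag n
  simp only [mul_zero, Real.exp_zero, one_mul, hinit1, hinit2] at hle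
  have hexppos := Real.exp_pos (Λ * t)
  push_cast at hle
  nlinarith [hle]

end DLe

/-- For every fixed `t ≥ 0`, `n ↦ K(t,n) + n·(m+1)/(m-μ+1)` is monotonically
increasing in `n` for `n ≥ m`. -/
theorem stmt_4
    (m : ℕ) (hm : 1 ≤ m) (f : ℕ → ℝ)
    (hf_nonneg : ∀ k, 0 ≤ f k)
    (hf_sum : ∑ k ∈ Finset.Icc 1 m, f k = 1)
    (hf_supp : ∀ k : ℕ, k = 0 ∨ m < k → f k = 0)
    (lam : ℝ) (hlam : 0 < lam)
    (γ : ℕ → ℕ → ℝ)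
    (hγ_zero : ∀ n j : ℕ, cdfF f n = 0 → 1 ≤ j → j ≤ n → γ n j = 1)
    (hγ_rec : ∀ n i : ℕ, 0 < cdfF f n → 1 ≤ i → i < n →
      γ n i = 2 * (∑ j ∈ Finset.Icc 1 (n - i), cdfF f j * γ (n - j) i) /
        (∑ k ∈ Finset.Icc (i + 1) n, cdfF f k))
    (hγ_diag : ∀ n : ℕ, 0 < cdfF f n →
      γ n n = (n : ℝ) - ∑ i ∈ Finset.Icc 1 (n - 1), γ n i)
    (t : ℝ) (ht : 0 ≤ t) :
    ∀ n₁ n₂ : ℕ, m ≤ n₁ → n₁ ≤ n₂ →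
      Kfun f γ lam t n₁ + (n₁ : ℝ) * ((m : ℝ) + 1) / ((m : ℝ) - muF f m + 1)
        ≤ Kfun f γ lam t n₂ + (n₂ : ℝ) * ((m : ℝ) + 1) / ((m : ℝ) - muF f m + 1) := by
  intro n₁ n₂ h₁ h₂
  have hμm := mu_le_m hf_nonneg hf_sum
  have hdpos : (0 : ℝ) < (m : ℝ) - muF f m + 1 := by linarith
  have step : ∀ k : ℕ, m ≤ k →
      Kfun f γ lam t k + (k : ℝ) * ((m : ℝ) + 1) / ((m : ℝ) - muF f m + 1)
        ≤ Kfun f γ lam t (k + 1) + ((k + 1 : ℕ) : ℝ) * ((m : ℝ) + 1) / ((m : ℝ) - muF f m + 1) := by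
    intro k hk
    have hD := D_le hm hf_nonneg hf_sum hf_supp hlam hγ_zero hγ_rec hγ_diag hk ht
    have hrwd : ((m : ℝ) + 1) / ((m : ℝ) + 1 - muF f m)
        = ((m : ℝ) + 1) / ((m : ℝ) - muF f m + 1) := by
      rw [show (m : ℝ) + 1 - muF f m = (m : ℝ) - muF f m + 1 from by ring]
    rw [hrwd] at hD
    have hdiv : ((k + 1 : ℕ) : ℝ) * ((m : ℝ) + 1) / ((m : ℝ) - muF f m + 1)
        = (k : ℝ) * ((m : ℝ) + 1) / ((m : ℝ) - muF f m + 1)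
          + ((m : ℝ) + 1) / ((m : ℝ) - muF f m + 1) := by
      push_cast
      field_simp
    rw [hdiv]
    unfold Kfun
    push_cast
    linarith
  induction n₂, h₂ using Nat.le_induction with
  | base => exact le_refl _
  | succ k hk IH => exact le_trans IH (step k (le_trans h₁ hk))
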